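/- Let A be an irreducible nonnegative matrix on a countable set S with ρ(A) < ∞. Then there exists h : S → (0,∞) such that Σ_y A(x,y) h(y) ≤ ρ(A) h(x) for all x ∈ S. -/

import Mathlib

open scoped ENNReal
open Filter
variable {S : Type*}

noncomputable def matPow [DecidableEq S] (A : S → S → ℝ≥0∞) : ℕ → S → S → ℝ≥0∞
  | 0 => fun x y => if x = y then 1 else 0
  | n + 1 => fun x y => ∑' z, matPow A n x z * A z y

section aux
variable [DecidableEq S] (A : S → S → ℝ≥0∞)

lemma matPow_one (x y : S) : matPow A 1 x y = A x y := by
  show (∑' w, matPow A 0 x w * A w y) = A x y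
  rw [tsum_eq_single x]
  · simp [matPow]
  · intro w hw; simp [matPow, Ne.symm hw]

lemma matPow_add (m n : ℕ) (x y : S) :
    matPow A (m + n) x y = ∑' w, matPow A m x w * matPow A n w y := by
  induction n generalizing y with
  | zero =>
    rw [Nat.add_zero, tsum_eq_single y]
    · simp [matPow]
    · intro w hw; simp [matPow, hw]
  | succ n ih =>
    show (∑' w, matPow A (m+n) x w * A w y) = ∑' w, matPow A m x w * (∑' u, matPow A n w u * A u y)
    calc (∑' w, matPow A (m+n) x w * A w y)
        = ∑' w, (∑' u, matPow A m x u * matPow A n u w) * A w y := by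
          simp only [fun w => ih w]
      _ = ∑' w, ∑' u, matPow A m x u * matPow A n u w * A w y := by
          simp only [ENNReal.tsum_mul_right]
      _ = ∑' u, ∑' w, matPow A m x u * (matPow A n u w * A w y) := by
          rw [ENNReal.tsum_comm]; simp only [mul_assoc]
      _ = ∑' u, matPow A m x u * (∑' w, matPow A n u w * A w y) := by
          simp only [ENNReal.tsum_mul_left]

lemma matPow_succ_left (k : ℕ) (x y : S) :
    matPow A (k + 1) x y = ∑' w, A x w * matPow A k w y := by
  rw [Nat.add_comm, matPow_add]
  simp only [matPow_one]

lemma matPow_mul_le (a b : ℕ) (x w y : S) :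
    matPow A a x w * matPow A b w y ≤ matPow A (a + b) x y := by
  rw [matPow_add]; exact ENNReal.le_tsum w

end aux
theorem exists_excessive_function [Countable S] [DecidableEq S]
    (A : S → S → ℝ≥0∞) (hfin : ∀ x y, A x y ≠ ⊤)
    (hirr : ∀ x y : S, ∃ n, 1 ≤ n ∧ 0 < matPow A n x y)
    (ρ : ℝ≥0∞) (hρ0 : 0 < ρ) (hρT : ρ ≠ ⊤)
    (hρ : ∀ x, Tendsto (fun n : ℕ => (matPow A n x x) ^ ((n : ℝ)⁻¹))
        (atTop ⊓ Filter.principal {n : ℕ | 0 < matPow A n x x}) (nhds ρ)) :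
    ∃ h : S → ℝ≥0∞, (∀ x, 0 < h x) ∧ (∀ x, h x ≠ ⊤) ∧
      ∀ x, ∑' y, A x y * h y ≤ ρ * h x := by
  rcases isEmpty_or_nonempty S with hS | hS
  · exact ⟨fun _ => 1, fun x => isEmptyElim x, fun x => isEmptyElim x, fun x => isEmptyElim x⟩
  obtain ⟨z⟩ := hS
  -- the approximating parameters r n ↑ ρ⁻¹
  set r : ℕ → ℝ≥0∞ := fun n => (ρ + ((n : ℝ≥0∞) + 1)⁻¹)⁻¹ with hrdef
  have hn1T : ∀ n : ℕ, ((n : ℝ≥0∞) + 1)⁻¹ ≠ ⊤ := fun n =>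
    ENNReal.inv_ne_top.2 (lt_of_lt_of_le one_pos le_add_self).ne'
  have hn10 : ∀ n : ℕ, ((n : ℝ≥0∞) + 1)⁻¹ ≠ 0 := fun n =>
    ENNReal.inv_ne_zero.2 (by simp [ENNReal.add_ne_top, ENNReal.natCast_ne_top])
  have hrT : ∀ n, r n ≠ ⊤ := fun n =>
    ENNReal.inv_ne_top.2 (lt_of_lt_of_le hρ0 le_self_add).ne'
  have hr0 : ∀ n, r n ≠ 0 := fun n =>
    ENNReal.inv_ne_zero.2 (ENNReal.add_ne_top.2 ⟨hρT, hn1T n⟩)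
  have hrinv : ∀ n, (r n)⁻¹ = ρ + ((n : ℝ≥0∞) + 1)⁻¹ := fun n => inv_inv _
  have hrmono : ∀ n, r 0 ≤ r n := by
    intro n
    refine ENNReal.inv_le_inv.2 (add_le_add_right (ENNReal.inv_le_inv.2 ?_) ρ)
    simp
  have hr00 : r 0 ≠ 0 := hr0 0
  -- eventual root bound at z
  have hAN : ∀ ρ' : ℝ≥0∞, ρ < ρ' → ∃ N, 1 ≤ N ∧ ∀ k, N ≤ k → matPow A k z z ≤ ρ' ^ k := by
    intro ρ' hρ'
    have hev := (hρ z).eventually_le_const hρ'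
    rw [eventually_inf_principal, eventually_atTop] at hev
    obtain ⟨N₀, hN₀⟩ := hev
    refine ⟨max N₀ 1, le_max_right _ _, fun k hk => ?_⟩
    rcases eq_or_ne (matPow A k z z) 0 with h0 | h0
    · simp [h0]
    have hk1 : k ≠ 0 := by
      have : 1 ≤ k := le_trans (le_max_right N₀ 1) hk
      omega
    have h1 : matPow A k z z ^ ((k : ℝ)⁻¹) ≤ ρ' :=
      hN₀ k (le_trans (le_max_left N₀ 1) hk) (pos_iff_ne_zero.2 h0)
    calc matPow A k z z = (matPow A k z z ^ ((k : ℝ)⁻¹)) ^ k :=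
          (ENNReal.rpow_inv_natCast_pow hk1 _).symm
      _ ≤ ρ' ^ k := pow_le_pow_left' h1 k
  -- all (z,z) entries are finite
  have hPzzT : ∀ k, matPow A k z z ≠ ⊤ := by
    obtain ⟨N, hN1, hN⟩ := hAN (ρ + 1) (ENNReal.lt_add_right hρT one_ne_zero)
    intro k hk
    rcases Nat.eq_zero_or_pos k with rfl | hkpos
    · simp [matPow] at hk
    have hsup : ∀ j : ℕ, matPow A k z z ^ (j + 1) ≤ matPow A (k * (j + 1)) z z := by
      intro j
      induction j with
      | zero => simp
      | succ j ih =>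
        have : matPow A (k * (j + 1)) z z * matPow A k z z ≤ matPow A (k * (j + 1) + k) z z :=
          matPow_mul_le A _ _ z z z
        calc matPow A k z z ^ (j + 2) = matPow A k z z ^ (j + 1) * matPow A k z z := by ring
          _ ≤ matPow A (k * (j + 1)) z z * matPow A k z z := mul_le_mul_left ih _
          _ ≤ matPow A (k * (j + 1) + k) z z := this
          _ = matPow A (k * (j + 2)) z z := by ring_nf
    have hNk : N ≤ k * N := Nat.le_mul_of_pos_left N hkpos
    obtain ⟨j, rfl⟩ : ∃ j, N = j + 1 := ⟨N - 1, by omega⟩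
    have h1 : (⊤ : ℝ≥0∞) ≤ matPow A (k * (j + 1)) z z := by
      calc (⊤ : ℝ≥0∞) = (⊤ : ℝ≥0∞) ^ (j + 1) := (ENNReal.top_pow (by omega)).symm
        _ = matPow A k z z ^ (j + 1) := by rw [hk]
        _ ≤ _ := hsup j
    have h2 := hN (k * (j + 1)) hNk
    have : (⊤ : ℝ≥0∞) ≤ (ρ + 1) ^ (k * (j + 1)) := le_trans h1 h2
    exact ENNReal.pow_ne_top (by simp [hρT, ENNReal.add_ne_top]) (top_le_iff.1 this)
  -- all entries are finite
  have hPT : ∀ (k : ℕ) (x y : S), matPow A k x y ≠ ⊤ := by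
    intro k x y hk
    obtain ⟨a, _, ha⟩ := hirr z x
    obtain ⟨b, _, hb⟩ := hirr y z
    have h1 : (⊤ : ℝ≥0∞) ≤ matPow A (a + (k + b)) z z := by
      calc (⊤ : ℝ≥0∞) = matPow A a z x * (matPow A k x y * matPow A b y z) := by
            rw [hk]; rw [ENNReal.top_mul hb.ne', ENNReal.mul_top ha.ne']
        _ ≤ matPow A a z x * matPow A (k + b) x z :=
            mul_le_mul_right (matPow_mul_le A _ _ x y z) _
        _ ≤ matPow A (a + (k + b)) z z := matPow_mul_le A _ _ z x z
    exact hPzzT _ (top_le_iff.1 h1)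
  -- the resolvent
  set G : ℕ → S → ℝ≥0∞ := fun n x => ∑' k, (r n) ^ k * matPow A k x z with hGdef
  have hG1 : ∀ n, 1 ≤ G n z := by
    intro n
    calc (1 : ℝ≥0∞) = (r n) ^ 0 * matPow A 0 z z := by simp [matPow]
      _ ≤ G n z := ENNReal.le_tsum 0
  have hGz0 : ∀ n, G n z ≠ 0 := fun n => by
    intro h; exact absurd (h ▸ hG1 n) (by simp)
  have hGzT : ∀ n, G n z ≠ ⊤ := by
    intro n
    have hlt : ρ < (r n)⁻¹ := by
      rw [hrinv]; exact ENNReal.lt_add_right hρT (hn10 n)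
    obtain ⟨ρ', hρ'1, hρ'2⟩ := exists_between hlt
    obtain ⟨N, hN1, hN⟩ := hAN ρ' hρ'1
    have hq : r n * ρ' < 1 := by
      have h := (ENNReal.mul_lt_mul_iff_right (hr0 n) (hrT n)).2 hρ'2
      rwa [ENNReal.mul_inv_cancel (hr0 n) (hrT n)] at h
    have hsplit : (∑ i ∈ Finset.range N, (r n) ^ i * matPow A i z z) +
        (∑' i, (r n) ^ (i + N) * matPow A (i + N) z z) = G n z :=
      Summable.sum_add_tsum_nat_add' (f := fun k => (r n) ^ k * matPow A k z z)
        (k := N) ENNReal.summable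
    intro hT
    rw [hT] at hsplit
    rcases ENNReal.add_eq_top.1 hsplit with h | h
    · have : ∀ i ∈ Finset.range N, (r n) ^ i * matPow A i z z ≠ ⊤ := fun i _ =>
        ENNReal.mul_ne_top (ENNReal.pow_ne_top (hrT n)) (hPzzT i)
      exact (ENNReal.sum_lt_top.2 (fun i hi => (this i hi).lt_top)).ne h
    · have hle : (∑' i : ℕ, (r n) ^ (i + N) * matPow A (i + N) z z) ≤ ∑' i : ℕ, (r n * ρ') ^ i := by
        refine ENNReal.tsum_le_tsum fun i => ?_
        calc (r n) ^ (i + N) * matPow A (i + N) z z ≤ (r n) ^ (i + N) * ρ' ^ (i + N) :=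
              mul_le_mul_right (hN _ (Nat.le_add_left N i)) _
          _ = (r n * ρ') ^ (i + N) := (mul_pow _ _ _).symm
          _ ≤ (r n * ρ') ^ i := pow_le_pow_of_le_one zero_le hq.le (Nat.le_add_right i N)
      rw [h] at hle
      have : (∑' i : ℕ, (r n * ρ') ^ i) ≠ ⊤ := by
        rw [ENNReal.tsum_geometric]
        exact ENNReal.inv_ne_top.2 (tsub_pos_of_lt hq).ne'
      exact this (top_le_iff.1 hle)
  -- lower comparison
  have hlow : ∀ x : S, ∃ c : ℝ≥0∞, 0 < c ∧ ∀ n, c * G n z ≤ G n x := by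
    intro x
    obtain ⟨m, _, hm⟩ := hirr x z
    refine ⟨(r 0) ^ m * matPow A m x z,
      ENNReal.mul_pos (pow_ne_zero m hr00) hm.ne', fun n => ?_⟩
    have hr0n : (r 0) ^ m ≤ (r n) ^ m := pow_le_pow_left' (hrmono n) m
    calc (r 0) ^ m * matPow A m x z * G n z ≤ (r n) ^ m * matPow A m x z * G n z := by
          exact mul_le_mul_left (mul_le_mul_left hr0n _) _
      _ = ∑' k, (r n) ^ m * matPow A m x z * ((r n) ^ k * matPow A k z z) := by
          rw [ENNReal.tsum_mul_left]
      _ ≤ ∑' k, (r n) ^ (m + k) * matPow A (m + k) x z := by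
          refine ENNReal.tsum_le_tsum fun k => ?_
          calc (r n) ^ m * matPow A m x z * ((r n) ^ k * matPow A k z z)
              = (r n) ^ (m + k) * (matPow A m x z * matPow A k z z) := by
                rw [pow_add]; ring
            _ ≤ (r n) ^ (m + k) * matPow A (m + k) x z :=
                mul_le_mul_right (matPow_mul_le A m k x z z) _
      _ ≤ G n x := ENNReal.tsum_comp_le_tsum_of_injective (add_right_injective m)
            (fun j => (r n) ^ j * matPow A j x z)
  -- upper comparison
  have hup : ∀ x : S, ∃ d : ℝ≥0∞, 0 < d ∧ d ≠ ⊤ ∧ ∀ n, d * G n x ≤ G n z := by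
    intro x
    obtain ⟨m, _, hm⟩ := hirr z x
    refine ⟨(r 0) ^ m * matPow A m z x,
      ENNReal.mul_pos (pow_ne_zero m hr00) hm.ne',
      ENNReal.mul_ne_top (ENNReal.pow_ne_top (hrT 0)) (hPT m z x), fun n => ?_⟩
    have hr0n : (r 0) ^ m ≤ (r n) ^ m := pow_le_pow_left' (hrmono n) m
    calc (r 0) ^ m * matPow A m z x * G n x ≤ (r n) ^ m * matPow A m z x * G n x := by
          exact mul_le_mul_left (mul_le_mul_left hr0n _) _
      _ = ∑' k, (r n) ^ m * matPow A m z x * ((r n) ^ k * matPow A k x z) := by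
          rw [ENNReal.tsum_mul_left]
      _ ≤ ∑' k, (r n) ^ (m + k) * matPow A (m + k) z z := by
          refine ENNReal.tsum_le_tsum fun k => ?_
          calc (r n) ^ m * matPow A m z x * ((r n) ^ k * matPow A k x z)
              = (r n) ^ (m + k) * (matPow A m z x * matPow A k x z) := by
                rw [pow_add]; ring
            _ ≤ (r n) ^ (m + k) * matPow A (m + k) z z :=
                mul_le_mul_right (matPow_mul_le A m k z x z) _
      _ ≤ G n z := ENNReal.tsum_comp_le_tsum_of_injective (add_right_injective m)
            (fun j => (r n) ^ j * matPow A j z z)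
  -- the recurrence
  have hGrec : ∀ n (x : S), (∑' y, A x y * G n y) ≤ (r n)⁻¹ * G n x := by
    intro n x
    have hstep : (∑' y, A x y * G n y) = ∑' k, (r n) ^ k * matPow A (k + 1) x z := by
      calc (∑' y, A x y * G n y)
          = ∑' y, ∑' k, A x y * ((r n) ^ k * matPow A k y z) := by
            refine tsum_congr fun y => ?_
            rw [ENNReal.tsum_mul_left]
        _ = ∑' k, ∑' y, A x y * ((r n) ^ k * matPow A k y z) := ENNReal.tsum_comm
        _ = ∑' k, (r n) ^ k * ∑' y, A x y * matPow A k y z := by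
            refine tsum_congr fun k => ?_
            rw [← ENNReal.tsum_mul_left]
            exact tsum_congr fun y => by ring
        _ = ∑' k, (r n) ^ k * matPow A (k + 1) x z := by
            refine tsum_congr fun k => ?_
            rw [matPow_succ_left]
    rw [hstep]
    calc (∑' k, (r n) ^ k * matPow A (k + 1) x z)
        = ∑' k, (r n)⁻¹ * ((r n) ^ (k + 1) * matPow A (k + 1) x z) := by
          refine tsum_congr fun k => ?_
          have h1 : (r n)⁻¹ * (r n) = 1 := ENNReal.inv_mul_cancel (hr0 n) (hrT n)
          calc (r n) ^ k * matPow A (k + 1) x z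
              = ((r n)⁻¹ * r n) * ((r n) ^ k * matPow A (k + 1) x z) := by
                rw [h1, one_mul]
            _ = (r n)⁻¹ * ((r n) ^ (k + 1) * matPow A (k + 1) x z) := by
                rw [pow_succ]; ring
      _ = (r n)⁻¹ * ∑' k, (r n) ^ (k + 1) * matPow A (k + 1) x z := ENNReal.tsum_mul_left
      _ ≤ (r n)⁻¹ * G n x := by
          refine mul_le_mul_right ?_ _
          exact ENNReal.tsum_comp_le_tsum_of_injective Nat.succ_injective
            (fun j => (r n) ^ j * matPow A j x z)
  -- the normalized functions
  set H : ℕ → S → ℝ≥0∞ := fun n x => G n x * (G n z)⁻¹ with hHdef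
  have hHlow : ∀ x : S, ∃ c : ℝ≥0∞, 0 < c ∧ ∀ n, c ≤ H n x := by
    intro x
    obtain ⟨c, hc0, hc⟩ := hlow x
    refine ⟨c, hc0, fun n => ?_⟩
    calc c = c * (G n z * (G n z)⁻¹) := by
          rw [ENNReal.mul_inv_cancel (hGz0 n) (hGzT n), mul_one]
      _ = c * G n z * (G n z)⁻¹ := by rw [mul_assoc]
      _ ≤ G n x * (G n z)⁻¹ := mul_le_mul_left (hc n) _
  have hHup : ∀ x : S, ∃ C : ℝ≥0∞, C ≠ ⊤ ∧ ∀ n, H n x ≤ C := by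
    intro x
    obtain ⟨d, hd0, hdT, hd⟩ := hup x
    refine ⟨d⁻¹, ENNReal.inv_ne_top.2 hd0.ne', fun n => ?_⟩
    have h1 : G n x ≤ d⁻¹ * G n z := by
      calc G n x = d⁻¹ * (d * G n x) := by
            rw [← mul_assoc, ENNReal.inv_mul_cancel hd0.ne' hdT, one_mul]
        _ ≤ d⁻¹ * G n z := mul_le_mul_right (hd n) _
    calc H n x ≤ d⁻¹ * G n z * (G n z)⁻¹ := mul_le_mul_left h1 _
      _ = d⁻¹ * (G n z * (G n z)⁻¹) := by rw [mul_assoc]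
      _ = d⁻¹ := by rw [ENNReal.mul_inv_cancel (hGz0 n) (hGzT n), mul_one]
  have hHrec : ∀ n (x : S), (∑' y, A x y * H n y) ≤ (r n)⁻¹ * H n x := by
    intro n x
    calc (∑' y, A x y * H n y) = (∑' y, A x y * G n y) * (G n z)⁻¹ := by
          rw [← ENNReal.tsum_mul_right]
          exact tsum_congr fun y => by rw [hHdef, mul_assoc]
      _ ≤ (r n)⁻¹ * G n x * (G n z)⁻¹ := mul_le_mul_left (hGrec n x) _
      _ = (r n)⁻¹ * H n x := by rw [mul_assoc]
  -- the candidate function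
  set h : S → ℝ≥0∞ := fun x => Filter.liminf (fun n => H n x) Filter.atTop with hhdef
  have hpos : ∀ x, 0 < h x := by
    intro x
    obtain ⟨c, hc0, hc⟩ := hHlow x
    exact lt_of_lt_of_le hc0 (Filter.le_liminf_of_le (by isBoundedDefault)
      (Filter.Eventually.of_forall fun n => hc n))
  have hbd : ∀ x, ∃ C : ℝ≥0∞, C ≠ ⊤ ∧ h x ≤ C := by
    intro x
    obtain ⟨C, hCT, hC⟩ := hHup x
    refine ⟨C, hCT, ?_⟩
    calc h x ≤ Filter.liminf (fun _ : ℕ => C) Filter.atTop :=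
          Filter.liminf_le_liminf (Filter.Eventually.of_forall fun n => hC n)
      _ = C := Filter.liminf_const C
  have hnt : ∀ x, h x ≠ ⊤ := by
    intro x
    obtain ⟨C, hCT, hC⟩ := hbd x
    exact fun hT => hCT (top_le_iff.1 (hT ▸ hC))
  refine ⟨h, hpos, hnt, fun x => ?_⟩
  -- Fatou
  letI : MeasurableSpace S := ⊤
  haveI : MeasurableSingletonClass S := ⟨fun _ => trivial⟩
  have fatou : (∑' y, A x y * h y) ≤
      Filter.liminf (fun n => ∑' y, A x y * H n y) Filter.atTop := by
    have hm : ∀ y : S, A x y * h y = Filter.liminf (fun n => A x y * H n y) Filter.atTop := by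
      intro y
      exact Monotone.map_liminf_of_continuousAt
        (f := fun t => A x y * t) (fun a b hab => mul_le_mul_right hab _)
        (fun n => H n y) ((ENNReal.continuous_const_mul (hfin x y)).continuousAt)
    calc (∑' y, A x y * h y)
        = ∑' y, Filter.liminf (fun n => A x y * H n y) Filter.atTop := tsum_congr hm
      _ = ∫⁻ y, Filter.liminf (fun n => A x y * H n y) Filter.atTop ∂(MeasureTheory.Measure.count) :=
          (MeasureTheory.lintegral_count _).symm
      _ ≤ Filter.liminf (fun n => ∫⁻ y, A x y * H n y ∂(MeasureTheory.Measure.count))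
            Filter.atTop :=
          MeasureTheory.lintegral_liminf_le (fun n => measurable_from_top)
      _ = Filter.liminf (fun n => ∑' y, A x y * H n y) Filter.atTop := by
          simp only [MeasureTheory.lintegral_count]
  refine le_trans fatou ?_
  refine le_trans (Filter.liminf_le_liminf
    (Filter.Eventually.of_forall fun n => hHrec n x)) ?_
  -- the limit computation
  obtain ⟨C, hCT, hC⟩ := hHup x
  have hρh : ρ * h x ≠ ⊤ := ENNReal.mul_ne_top hρT (hnt x)
  apply ENNReal.le_of_forall_pos_le_add
  intro ε hε _
  have hC1T : C + 1 ≠ ⊤ := ENNReal.add_ne_top.2 ⟨hCT, ENNReal.one_ne_top⟩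
  have hεC : (0 : ℝ≥0∞) < (ε : ℝ≥0∞) / (C + 1) :=
    ENNReal.div_pos (by exact_mod_cast hε.ne') hC1T
  obtain ⟨N, hN⟩ := ENNReal.exists_inv_nat_lt hεC.ne'
  have key : ∀ n, N ≤ n → (r n)⁻¹ * H n x ≤ ρ * H n x + ε := by
    intro n hn
    rw [hrinv n, add_mul]
    refine add_le_add_right ?_ _
    calc ((n : ℝ≥0∞) + 1)⁻¹ * H n x ≤ (N : ℝ≥0∞)⁻¹ * (C + 1) := by
          refine mul_le_mul' (ENNReal.inv_le_inv.2 ?_) (le_trans (hC n) le_self_add)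
          exact_mod_cast le_trans (by exact_mod_cast hn) (le_self_add)
      _ ≤ ((ε : ℝ≥0∞) / (C + 1)) * (C + 1) := mul_le_mul_left hN.le _
      _ = (ε : ℝ≥0∞) := ENNReal.div_mul_cancel
          (by simp) hC1T
  calc Filter.liminf (fun n => (r n)⁻¹ * H n x) Filter.atTop
      ≤ Filter.liminf (fun n => ρ * H n x + ε) Filter.atTop :=
        Filter.liminf_le_liminf (Filter.eventually_atTop.2 ⟨N, key⟩)
    _ = Filter.liminf (fun n => ρ * H n x) Filter.atTop + ε := by
        refine (Monotone.map_liminf_of_continuousAt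
          (f := fun t : ℝ≥0∞ => t + (ε : ℝ≥0∞)) (fun a b hab => add_le_add_left hab _)
          (fun n => ρ * H n x) ?_).symm
        exact (continuous_id.add continuous_const).continuousAt
    _ = ρ * h x + ε := by
        congr 1
        refine (Monotone.map_liminf_of_continuousAt
          (f := fun t : ℝ≥0∞ => ρ * t) (fun a b hab => mul_le_mul_right hab _)
          (fun n => H n x) ((ENNReal.continuous_const_mul hρT).continuousAt)).symm
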